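/- (Equivalence of the two descriptions of the Marton-coding rate region, Theorem 8.) Let a₁, a₂, a_z, b₁, b₂, z₁, z₂ be nonnegative real numbers with b₁ ≥ z₁ and b₂ ≥ z₂ (playing the roles of I(U;Y₁), I(U;Y₂), I(U;Z), I(V₁;Y₁|U), I(V₂;Y₂|U), I(V₁;Z|U), I(V₂;Z|U)). For nonnegative reals R₁, R₂ the following are equivalent: (A) there exist R₁k, R₁s, R₂k, R₂s ≥ 0 with R₁ = R₁k + R₁s and R₂ = R₂k + R₂s such that, setting R_k := max{R₁k + R₂k, max{R₁k, R₂k} + a_z}, one has R₁s ≤ b₁ − z₁, R₂s ≤ b₂ − z₂, R_k + R₁s ≤ a₁ + b₁ − z₁, and R_k + R₂s ≤ a₂ + b₂ − z₂; (B) R₂ ≤ (b₂ − z₂) + a₂ − a_z, R₂ ≤ (b₁ − z₁) + (b₂ − z₂) + a₁ − a_z, R₁ ≤ (b₁ − z₁) + a₁ − a_z, R₁ ≤ (b₁ − z₁) + (b₂ − z₂) + a₂ − a_z, and R₁ + R₂ ≤ (b₁ − z₁) + (b₂ − z₂) + min{a₁, a₂}. -/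

import Mathlib

private lemma aux_max_le (p q r s c : ℝ) (h1 : p + q + s ≤ c) (h2 : p + r + s ≤ c)
    (h3 : q + r + s ≤ c) : max (p + q) (max p q + r) + s ≤ c := by
  have hm : max p q + r + s ≤ c := by
    rcases le_total p q with h | h
    · rw [max_eq_right h]; linarith
    · rw [max_eq_left h]; linarith
  rcases le_total (p + q) (max p q + r) with h | h
  · rw [max_eq_right h]; linarith
  · rw [max_eq_left h]; linarith


/-- Equivalence of the two descriptions of the Marton-coding rate region (Theorem 8):
the split form (A) in terms of `R₁ = R₁k + R₁s`, `R₂ = R₂k + R₂s` is equivalent to the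
direct form (B) in terms of `(R₁, R₂)`.  Here `a₁, a₂, a_z, b₁, b₂, z₁, z₂` play the
roles of `I(U;Y₁), I(U;Y₂), I(U;Z), I(V₁;Y₁|U), I(V₂;Y₂|U), I(V₁;Z|U), I(V₂;Z|U)`,
with `b₁ ≥ z₁` and `b₂ ≥ z₂`. -/
theorem marton_region_equiv
    (a₁ a₂ az b₁ b₂ z₁ z₂ : ℝ)
    (ha₁ : 0 ≤ a₁) (ha₂ : 0 ≤ a₂) (haz : 0 ≤ az)
    (hb₁ : 0 ≤ b₁) (hb₂ : 0 ≤ b₂) (hz₁ : 0 ≤ z₁) (hz₂ : 0 ≤ z₂)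
    (hbz₁ : z₁ ≤ b₁) (hbz₂ : z₂ ≤ b₂)
    (R₁ R₂ : ℝ) (hR₁ : 0 ≤ R₁) (hR₂ : 0 ≤ R₂) :
    (∃ R₁k R₁s R₂k R₂s : ℝ, 0 ≤ R₁k ∧ 0 ≤ R₁s ∧ 0 ≤ R₂k ∧ 0 ≤ R₂s ∧
        R₁ = R₁k + R₁s ∧ R₂ = R₂k + R₂s ∧
        R₁s ≤ b₁ - z₁ ∧
        R₂s ≤ b₂ - z₂ ∧
        max (R₁k + R₂k) (max R₁k R₂k + az) + R₁s ≤ a₁ + b₁ - z₁ ∧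
        max (R₁k + R₂k) (max R₁k R₂k + az) + R₂s ≤ a₂ + b₂ - z₂) ↔
    (R₂ ≤ (b₂ - z₂) + a₂ - az ∧
      R₂ ≤ (b₁ - z₁) + (b₂ - z₂) + a₁ - az ∧
      R₁ ≤ (b₁ - z₁) + a₁ - az ∧
      R₁ ≤ (b₁ - z₁) + (b₂ - z₂) + a₂ - az ∧
      R₁ + R₂ ≤ (b₁ - z₁) + (b₂ - z₂) + min a₁ a₂) := by
  constructor
  · rintro ⟨R₁k, R₁s, R₂k, R₂s, hk1, hs1, hk2, hs2, hE1, hE2, hb1, hb2, hm1, hm2⟩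
    -- extract component inequalities from the max bounds
    have e1 : R₁k + R₂k + R₁s ≤ a₁ + b₁ - z₁ :=
      le_trans (add_le_add_left (le_max_left _ _) _) hm1
    have e2 : R₁k + az + R₁s ≤ a₁ + b₁ - z₁ := by
      have h := le_trans (add_le_add_left
        (le_trans (add_le_add_left (le_max_left R₁k R₂k) az) (le_max_right _ _)) _) hm1
      linarith
    have e3 : R₂k + az + R₁s ≤ a₁ + b₁ - z₁ := by
      have h := le_trans (add_le_add_left
        (le_trans (add_le_add_left (le_max_right R₁k R₂k) az) (le_max_right _ _)) _) hm1
      linarith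
    have f1 : R₁k + R₂k + R₂s ≤ a₂ + b₂ - z₂ :=
      le_trans (add_le_add_left (le_max_left _ _) _) hm2
    have f2 : R₁k + az + R₂s ≤ a₂ + b₂ - z₂ := by
      have h := le_trans (add_le_add_left
        (le_trans (add_le_add_left (le_max_left R₁k R₂k) az) (le_max_right _ _)) _) hm2
      linarith
    have f3 : R₂k + az + R₂s ≤ a₂ + b₂ - z₂ := by
      have h := le_trans (add_le_add_left
        (le_trans (add_le_add_left (le_max_right R₁k R₂k) az) (le_max_right _ _)) _) hm2
      linarith
    refine ⟨by linarith, by linarith, by linarith, by linarith, ?_⟩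
    rcases le_total a₁ a₂ with h | h
    · rw [min_eq_left h]; linarith
    · rw [min_eq_right h]; linarith
  · rintro ⟨h1, h2, h3, h4, h5⟩
    have h5a : R₁ + R₂ ≤ (b₁ - z₁) + (b₂ - z₂) + a₁ :=
      le_trans h5 (by linarith [min_le_left a₁ a₂])
    have h5b : R₁ + R₂ ≤ (b₁ - z₁) + (b₂ - z₂) + a₂ :=
      le_trans h5 (by linarith [min_le_right a₁ a₂])
    set c₁ : ℝ := a₁ + (b₁ - z₁) - az - R₁ with hc₁def
    set c₂ : ℝ := a₂ + (b₂ - z₂) - az - R₂ with hc₂def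
    have hc₁ : 0 ≤ c₁ := by rw [hc₁def]; linarith
    have hc₂ : 0 ≤ c₂ := by rw [hc₂def]; linarith
    set L₁ : ℝ := max 0 (R₁ - (b₁ - z₁)) with hL₁def
    set L₂ : ℝ := max 0 (R₂ - (b₂ - z₂)) with hL₂def
    have hL₁0 : 0 ≤ L₁ := le_max_left _ _
    have hL₁r : R₁ - (b₁ - z₁) ≤ L₁ := le_max_right _ _
    have hL₂0 : 0 ≤ L₂ := le_max_left _ _
    have hL₂r : R₂ - (b₂ - z₂) ≤ L₂ := le_max_right _ _
    set K₁ : ℝ := max L₁ (L₂ - c₁) with hK₁def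
    set K₂ : ℝ := max L₂ (L₁ - c₂) with hK₂def
    have hK₁L : L₁ ≤ K₁ := le_max_left _ _
    have hK₁L' : L₂ - c₁ ≤ K₁ := le_max_right _ _
    have hK₂L : L₂ ≤ K₂ := le_max_left _ _
    have hK₂L' : L₁ - c₂ ≤ K₂ := le_max_right _ _
    -- upper bounds for K₁
    have hK₁R : K₁ ≤ R₁ := by
      refine max_le (max_le hR₁ (by linarith)) ?_
      have : L₂ ≤ R₁ + c₁ := max_le (by rw [hc₁def]; linarith) (by rw [hc₁def]; linarith)
      linarith
    have hK₁u : K₁ ≤ a₂ + (b₂ - z₂) - R₂ := by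
      refine max_le (max_le (by linarith) (by linarith)) ?_
      have : L₂ ≤ a₂ + (b₂ - z₂) - R₂ + c₁ :=
        max_le (by rw [hc₁def]; linarith) (by rw [hc₁def]; linarith)
      linarith
    -- upper bounds for K₂
    have hK₂R : K₂ ≤ R₂ := by
      refine max_le (max_le hR₂ (by linarith)) ?_
      have : L₁ ≤ R₂ + c₂ := max_le (by rw [hc₂def]; linarith) (by rw [hc₂def]; linarith)
      linarith
    have hK₂u : K₂ ≤ a₁ + (b₁ - z₁) - R₁ := by
      refine max_le (max_le (by linarith) (by linarith)) ?_
      have : L₁ ≤ a₁ + (b₁ - z₁) - R₁ + c₂ :=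
        max_le (by rw [hc₂def]; linarith) (by rw [hc₂def]; linarith)
      linarith
    -- difference constraints
    have hd1 : K₂ - K₁ ≤ c₁ :=
      sub_le_iff_le_add.mpr (max_le (by linarith) (by linarith))
    have hd2 : K₁ - K₂ ≤ c₂ :=
      sub_le_iff_le_add.mpr (max_le (by linarith) (by linarith))
    refine ⟨K₁, R₁ - K₁, K₂, R₂ - K₂, by linarith, by linarith, by linarith, by linarith,
      by ring, by ring, by linarith, by linarith, ?_, ?_⟩
    · exact aux_max_le _ _ _ _ _ (by linarith) (by rw [hc₁def] at hd1 hc₁; linarith)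
        (by rw [hc₁def] at hd1; linarith)
    · exact aux_max_le _ _ _ _ _ (by linarith) (by rw [hc₂def] at hd2; linarith)
        (by rw [hc₂def] at hd2 hc₂; linarith)
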